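/- Let F be a non-trivial finite abelian group (written additively) and let φ : F → F be a group endomorphism such that the kernel of φ has at most 2 elements and φ(φ(x)) = −2·φ(x) for all x ∈ F. Then: (1) the Sylow 2-subgroup of F is isomorphic to (ℤ/2^i ℤ) × (ℤ/2^j ℤ) for some natural numbers i ≥ j with j ≤ 1; and (2) for every element x ∈ F of odd order, φ(x) = −2·x. -/

import Mathlib

set_option maxHeartbeats 1000000

open AddSubgroup

/-- Bound on the cardinality of the kernel of a composite. -/
lemma card_ker_comp_aux18 {F : Type*} [AddCommGroup F] [Finite F] (f g : F →+ F) :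
    Nat.card (g.comp f).ker ≤ Nat.card g.ker * Nat.card f.ker := by
  set K := (g.comp f).ker with hK
  let h : K →+ F := f.comp K.subtype
  have h1 : Nat.card K = Nat.card (K ⧸ h.ker) * Nat.card h.ker :=
    AddSubgroup.card_eq_card_quotient_mul_card_addSubgroup h.ker
  have h2 : Nat.card (K ⧸ h.ker) = Nat.card h.range :=
    Nat.card_congr (QuotientAddGroup.quotientKerEquivRange h).toEquiv
  have h3 : Nat.card h.range ≤ Nat.card g.ker := by
    apply AddSubgroup.card_le_of_le
    rintro - ⟨⟨x, hx⟩, rfl⟩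
    exact hx
  have h4 : Nat.card h.ker ≤ Nat.card f.ker := by
    apply Nat.card_le_card_of_injective
      (fun y : h.ker => (⟨(y.1 : F), y.2⟩ : f.ker))
    intro a b hab
    simp only [Subtype.mk.injEq] at hab
    exact Subtype.ext (Subtype.ext (Subtype.mk.inj hab))
  rw [h1, h2]
  exact Nat.mul_le_mul h3 h4

/-- A finite abelian group with two elements whose cyclic subgroups intersect trivially and
whose orders multiply to the group order splits as a product of two cyclic groups. -/
lemma prod_equiv_of_orders_aux18 {T : Type*} [AddCommGroup T] [Finite T] (x y : T)
    (hxy : zmultiples x ⊓ zmultiples y = ⊥)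
    (hcard : Nat.card T = addOrderOf x * addOrderOf y) :
    Nonempty (T ≃+ ZMod (addOrderOf x) × ZMod (addOrderOf y)) := by
  set m := addOrderOf x with hm
  set n := addOrderOf y with hn
  haveI : NeZero m := ⟨(addOrderOf_pos x).ne'⟩
  haveI : NeZero n := ⟨(addOrderOf_pos y).ne'⟩
  have hxm : (zmultiplesHom T x) (m : ℤ) = 0 := by
    simp only [zmultiplesHom_apply, natCast_zsmul]; exact addOrderOf_nsmul_eq_zero x
  have hyn : (zmultiplesHom T y) (n : ℤ) = 0 := by
    simp only [zmultiplesHom_apply, natCast_zsmul]; exact addOrderOf_nsmul_eq_zero y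
  let f1 : ZMod m →+ T := ZMod.lift m ⟨zmultiplesHom T x, hxm⟩
  let f2 : ZMod n →+ T := ZMod.lift n ⟨zmultiplesHom T y, hyn⟩
  have cast1 : ∀ a : ZMod m, ((a.val : ℤ) : ZMod m) = a := by
    intro a; push_cast; rw [ZMod.natCast_val, ZMod.cast_id]
  have cast2 : ∀ b : ZMod n, ((b.val : ℤ) : ZMod n) = b := by
    intro b; push_cast; rw [ZMod.natCast_val, ZMod.cast_id]
  have key1 : ∀ a : ZMod m, f1 a = (a.val : ℤ) • x := by
    intro a
    conv_lhs => rw [← cast1 a]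
    rw [show f1 = ZMod.lift m ⟨zmultiplesHom T x, hxm⟩ from rfl, ZMod.lift_coe]
    rfl
  have key2 : ∀ b : ZMod n, f2 b = (b.val : ℤ) • y := by
    intro b
    conv_lhs => rw [← cast2 b]
    rw [show f2 = ZMod.lift n ⟨zmultiplesHom T y, hyn⟩ from rfl, ZMod.lift_coe]
    rfl
  have hf1 : ∀ a : ZMod m, f1 a = 0 → a = 0 := by
    intro a ha
    rw [key1] at ha
    have : m ∣ a.val := addOrderOf_dvd_of_nsmul_eq_zero (by rwa [natCast_zsmul] at ha)
    exact (ZMod.val_eq_zero a).mp (Nat.eq_zero_of_dvd_of_lt this (ZMod.val_lt a))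
  have hf2 : ∀ b : ZMod n, f2 b = 0 → b = 0 := by
    intro b hb
    rw [key2] at hb
    have : n ∣ b.val := addOrderOf_dvd_of_nsmul_eq_zero (by rwa [natCast_zsmul] at hb)
    exact (ZMod.val_eq_zero b).mp (Nat.eq_zero_of_dvd_of_lt this (ZMod.val_lt b))
  let Ψ : ZMod m × ZMod n →+ T := f1.coprod f2
  have hΨ : ∀ p : ZMod m × ZMod n, Ψ p = f1 p.1 + f2 p.2 := fun p => rfl
  have hinj : Function.Injective Ψ := by
    rw [injective_iff_map_eq_zero]
    rintro ⟨a, b⟩ hab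
    rw [hΨ] at hab
    have h1 : f1 a ∈ zmultiples x := ⟨a.val, (key1 a).symm⟩
    have h2 : f1 a ∈ zmultiples y := by
      rw [eq_neg_of_add_eq_zero_left hab]
      exact neg_mem ⟨b.val, (key2 b).symm⟩
    have h0 : f1 a = 0 := by
      have : f1 a ∈ zmultiples x ⊓ zmultiples y := ⟨h1, h2⟩
      rwa [hxy, AddSubgroup.mem_bot] at this
    have hb0 : f2 b = 0 := by rwa [h0, zero_add] at hab
    exact Prod.ext (hf1 a h0) (hf2 b hb0)
  have hrange : Ψ.range = ⊤ := by
    apply AddSubgroup.eq_top_of_card_eq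
    rw [Nat.card_congr (AddMonoidHom.ofInjective hinj).toEquiv.symm, hcard,
      Nat.card_prod, Nat.card_zmod, Nat.card_zmod]
  have hsurj : Function.Surjective Ψ := fun t => by
    have : t ∈ Ψ.range := hrange ▸ AddSubgroup.mem_top t
    exact this
  exact ⟨(AddEquiv.ofBijective Ψ ⟨hinj, hsurj⟩).symm⟩


private def iter18 {F : Type*} [AddCommGroup F] (φ : F →+ F) : ℕ → (F →+ F)
  | 0 => AddMonoidHom.id F
  | n + 1 => φ.comp (iter18 φ n)

private lemma iter18_card_ker {F : Type*} [AddCommGroup F] [Finite F] (φ : F →+ F)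
    (hker : Nat.card φ.ker ≤ 2) : ∀ n, Nat.card (iter18 φ n).ker ≤ 2 ^ n := by
  intro n
  induction n with
  | zero =>
    have hb : (iter18 φ 0).ker = ⊥ := by
      ext t; simp [iter18]
    rw [hb]
    simp
  | succ n ih =>
    calc Nat.card (iter18 φ (n + 1)).ker ≤ Nat.card φ.ker * Nat.card (iter18 φ n).ker :=
          card_ker_comp_aux18 _ _
      _ ≤ 2 * 2 ^ n := Nat.mul_le_mul hker ih
      _ = 2 ^ (n + 1) := by ring

private lemma iter18_formula {F : Type*} [AddCommGroup F] (φ : F →+ F)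
    (hphi : ∀ x : F, φ (φ x) = -(2 • φ x)) :
    ∀ (k : ℕ) (v : F), iter18 φ (k + 1) v = (-2 : ℤ) ^ k • φ v := by
  intro k
  induction k with
  | zero =>
    intro v
    simp [iter18]
  | succ k ih =>
    intro v
    rw [show iter18 φ (k + 1 + 1) = φ.comp (iter18 φ (k + 1)) from rfl,
      AddMonoidHom.comp_apply, ih v, map_zsmul, hphi]
    have hneg : -(2 • φ v) = (-2 : ℤ) • φ v := by
      rw [← natCast_zsmul, ← neg_zsmul]; norm_num
    rw [hneg, smul_smul, ← pow_succ]

private lemma iter18_tor {F : Type*} [AddCommGroup F] (φ : F →+ F)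
    (hphi : ∀ x : F, φ (φ x) = -(2 • φ x)) (k : ℕ) (v : F) (hv : 2 ^ k • v = 0) :
    v ∈ (iter18 φ (k + 1)).ker := by
  rw [AddMonoidHom.mem_ker, iter18_formula φ hphi k v]
  have h2 : ((2 : ℤ)) ^ k • φ v = 0 := by
    rw [← map_zsmul]
    have h3 : (2 : ℤ) ^ k • v = 0 := by
      have : ((2 ^ k : ℕ) : ℤ) • v = 0 := by rw [natCast_zsmul, hv]
      simpa using this
    rw [h3, map_zero]
  rw [neg_pow, mul_smul, h2, smul_zero]

theorem stmt_18 {F : Type*} [AddCommGroup F] [Finite F] [Nontrivial F]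
    (φ : F →+ F) (hker : Nat.card φ.ker ≤ 2)
    (hphi : ∀ x : F, φ (φ x) = -(2 • φ x)) :
    (∃ i j : ℕ, j ≤ i ∧ j ≤ 1 ∧
      Nonempty ((AddCommGroup.primaryComponent F 2) ≃+ (ZMod (2 ^ i) × ZMod (2 ^ j)))) ∧
    ∀ x : F, Odd (addOrderOf x) → φ x = -(2 • x) := by
  constructor
  · -- Part 1: structure of the 2-primary component
    classical
    -- the 2-primary component
    set T := AddCommGroup.primaryComponent F 2 with hT
    obtain ⟨g, hg⟩ := AddMonoid.exists_addOrderOf_eq_exponent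
      (AddMonoid.ExponentExists.of_finite (G := T))
    obtain ⟨i, hi⟩ : ∃ i : ℕ, addOrderOf (g : F) = 2 ^ i :=
      AddCommGroup.mem_primaryComponent_iff_addOrderOf.mp g.2
    have hgi : addOrderOf g = 2 ^ i := by rw [← AddSubgroup.addOrderOf_coe g, hi]
    have hexp : AddMonoid.exponent T = 2 ^ i := hg.symm.trans hgi
    have hall : ∀ t : T, (2 : ℕ) ^ i • t = 0 := fun t => by
      rw [← hexp]; exact AddMonoid.exponent_nsmul_eq_zero t
    -- cardinality bound for T
    have hmem : ∀ t : T, (t : F) ∈ (iter18 φ (i + 1)).ker := by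
      intro t
      apply iter18_tor φ hphi i
      exact_mod_cast congrArg Subtype.val (hall t)
    have hcardT : Nat.card T ≤ 2 ^ (i + 1) := by
      calc Nat.card T ≤ Nat.card (iter18 φ (i + 1)).ker := by
            apply Nat.card_le_card_of_injective (fun t : T => (⟨(t : F), hmem t⟩ : (iter18 φ (i+1)).ker))
            intro a b hab
            simp only [Subtype.mk.injEq] at hab
            exact Subtype.ext hab
        _ ≤ 2 ^ (i + 1) := iter18_card_ker φ hker _
    -- Lagrange
    set X := zmultiples g with hXdef
    have hX : Nat.card X = 2 ^ i := by rw [Nat.card_zmultiples, hgi]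
    have hquot : Nat.card T = Nat.card (T ⧸ X) * 2 ^ i := by
      rw [AddSubgroup.card_eq_card_quotient_mul_card_addSubgroup X, hX]
    have hq2 : Nat.card (T ⧸ X) ≤ 2 := by
      have h2i : 0 < 2 ^ i := Nat.pow_pos (by norm_num)
      have hle : Nat.card (T ⧸ X) * 2 ^ i ≤ 2 * 2 ^ i := by
        rw [← hquot]
        calc Nat.card T ≤ 2 ^ (i + 1) := hcardT
          _ = 2 * 2 ^ i := by ring
      exact Nat.le_of_mul_le_mul_right hle h2i
    have hq1 : 1 ≤ Nat.card (T ⧸ X) := Nat.card_pos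
    have hq12 : Nat.card (T ⧸ X) = 1 ∨ Nat.card (T ⧸ X) = 2 := by omega
    rcases hq12 with hc1 | hc2
    · -- cyclic case
      refine ⟨i, 0, Nat.zero_le i, Nat.zero_le 1, ?_⟩
      have hcard : Nat.card T = addOrderOf g * addOrderOf (0 : T) := by
        rw [addOrderOf_zero, hgi, mul_one, hquot, hc1, one_mul]
      have hbot : zmultiples g ⊓ zmultiples (0 : T) = ⊥ := by
        rw [zmultiples_zero_eq_bot, inf_bot_eq]
      obtain ⟨e⟩ := prod_equiv_of_orders_aux18 g (0 : T) hbot hcard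
      rw [hgi, addOrderOf_zero] at e
      rw [pow_zero]
      exact ⟨e⟩
    · -- rank two case
      have hi1 : 1 ≤ i := by
        by_contra hcon
        push_neg at hcon
        interval_cases i
        · have hsub : ∀ t : T, t = 0 := by
            intro t
            have := hall t
            simpa using this
          have : Nat.card T = 1 := by
            haveI : Subsingleton T := ⟨fun a b => (hsub a).trans (hsub b).symm⟩
            exact Nat.card_of_subsingleton (0 : T)
          omega
      refine ⟨i, 1, hi1, le_refl 1, ?_⟩
      -- find y outside X
      haveI : Nontrivial (T ⧸ X) := Finite.one_lt_card_iff_nontrivial.mp (by omega)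
      obtain ⟨q, hq⟩ := exists_ne (0 : T ⧸ X)
      obtain ⟨y, rfl⟩ := QuotientAddGroup.mk'_surjective X q
      have hyX : y ∉ X := fun h =>
        hq (by rwa [QuotientAddGroup.mk'_apply, QuotientAddGroup.eq_zero_iff])
      have h2q : (2 : ℕ) • (QuotientAddGroup.mk' X y) = 0 := by
        apply addOrderOf_dvd_iff_nsmul_eq_zero.mp
        have hd := addOrderOf_dvd_natCard (QuotientAddGroup.mk' X y)
        rwa [hc2] at hd
      have h2yX : (2 : ℕ) • y ∈ X := by
        have h := h2q
        rw [← map_nsmul] at h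
        rw [QuotientAddGroup.mk'_apply] at h
        exact (QuotientAddGroup.eq_zero_iff _).mp h
      obtain ⟨c, hc⟩ := mem_zmultiples_iff.mp h2yX
      have hceven : (2 : ℤ) ∣ c := by
        obtain ⟨i', rfl⟩ : ∃ i', i = i' + 1 := ⟨i - 1, (Nat.succ_pred_eq_of_pos hi1).symm⟩
        have hzero : ((2 : ℤ) ^ i' * c) • g = 0 := by
          rw [mul_smul, hc]
          have : ((2 : ℕ) • y : T) = (2 : ℤ) • y := by rw [← natCast_zsmul]; norm_num
          rw [this, smul_smul, ← pow_succ]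
          have : ((2 ^ (i' + 1) : ℕ) : ℤ) • y = 0 := by rw [natCast_zsmul, hall y]
          simpa using this
        have hdvd : ((2 : ℤ) ^ (i' + 1)) ∣ (2 : ℤ) ^ i' * c := by
          have := addOrderOf_dvd_iff_zsmul_eq_zero.mpr hzero
          rw [hgi] at this
          simpa using this
        rw [pow_succ] at hdvd
        exact (mul_dvd_mul_iff_left (a := (2 : ℤ) ^ i') (by positivity)).mp hdvd
      obtain ⟨d, hd⟩ := hceven
      set w := y - d • g with hw
      have hwX : w ∉ X := by
        intro h
        apply hyX
        have : y = w + d • g := by rw [hw]; abel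
        rw [this]
        exact add_mem h (zsmul_mem (mem_zmultiples g) d)
      have hw0 : w ≠ 0 := fun h => hwX (h ▸ zero_mem X)
      have h2w : (2 : ℤ) • w = 0 := by
        rw [hw, smul_sub, smul_smul, ← hd, hc]
        have : ((2 : ℕ) • y : T) = (2 : ℤ) • y := by rw [← natCast_zsmul]; norm_num
        rw [this, sub_self]
      have h2wn : (2 : ℕ) • w = 0 := by
        have : ((2 : ℕ) : ℤ) • w = 0 := by norm_num [h2w]
        rwa [natCast_zsmul] at this
      have hw2 : addOrderOf w = 2 := addOrderOf_eq_prime h2wn hw0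
      have hbot : zmultiples g ⊓ zmultiples w = ⊥ := by
        rw [eq_bot_iff]
        rintro v ⟨hv1, hv2⟩
        obtain ⟨a, ha⟩ := mem_zmultiples_iff.mp hv2
        rcases Int.even_or_odd a with ⟨k, hk⟩ | ⟨k, hk⟩
        · rw [AddSubgroup.mem_bot, ← ha, hk, show k + k = k * 2 by ring, mul_smul, h2w,
            smul_zero]
        · exfalso
          have hvw : v = w := by
            rw [← ha, hk, add_zsmul, one_zsmul, mul_comm, mul_smul, h2w, smul_zero, zero_add]
          exact hwX (hvw ▸ hv1)
      have hcard : Nat.card T = addOrderOf g * addOrderOf w := by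
        rw [hgi, hw2, hquot, hc2]
        ring
      obtain ⟨e⟩ := prod_equiv_of_orders_aux18 g w hbot hcard
      rw [hgi, hw2] at e
      rw [pow_one]
      exact ⟨e⟩
  · -- Part 2: elements of odd order
    intro x hodd
    set z := φ x + 2 • x with hz
    have hzker : z ∈ φ.ker := by
      rw [AddMonoidHom.mem_ker, hz, map_add, hphi, map_nsmul]
      abel
    have hzo2 : addOrderOf z ∣ 2 := by
      have h1 : addOrderOf z ∣ Nat.card φ.ker := by
        have := addOrderOf_dvd_natCard (⟨z, hzker⟩ : φ.ker)
        rwa [AddSubgroup.addOrderOf_mk] at this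
      have h2 : Nat.card φ.ker ∣ 2 := by
        interval_cases h : (Nat.card φ.ker)
        · exact absurd h (Nat.card_pos).ne'
        · exact one_dvd 2
        · exact dvd_rfl
      exact h1.trans h2
    have hzon : addOrderOf z ∣ addOrderOf x := by
      apply addOrderOf_dvd_of_nsmul_eq_zero
      rw [hz, smul_add, ← map_nsmul, addOrderOf_nsmul_eq_zero, map_zero, smul_comm,
        addOrderOf_nsmul_eq_zero, smul_zero, add_zero]
    have hz1 : addOrderOf z = 1 := by
      rcases (Nat.dvd_prime Nat.prime_two).mp hzo2 with h | h
      · exact h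
      · exact absurd (h ▸ hzon) (by simpa using hodd.not_two_dvd_nat)
    have hz0 : z = 0 := by
      have h := addOrderOf_nsmul_eq_zero z
      rwa [hz1, one_nsmul] at h
    rw [hz] at hz0
    exact eq_neg_of_add_eq_zero_left hz0
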